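/- arXiv:1902.03662 — 3 statements merged into one kernel-verified Lean document; each statement's English description precedes it below -/
import Mathlib

section
/- Let ω = (−1 − i√3)/2, v₁ = ((i√3 − 1)/2, 1, 1), v₂ = ((i√3 − 1)/2, −ω, 1), v₄ = (1, 0, 0) in ℂ³, and ⟨v,w⟩ := conj(w)ᵗ J v with J having rows (0,0,1),(0,1,0),(1,0,0). Then arg(−⟨v₄,v₁⟩·⟨v₁,v₂⟩·⟨v₂,v₄⟩) = π/3. -/
/-- The Hermitian form ⟨v,w⟩ = conj(w)ᵗ J v with J having rows
(0,0,1),(0,1,0),(1,0,0). -/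
def hermForm (v w : Fin 3 → ℂ) : ℂ :=
  (starRingEnd ℂ) (w 0) * v 2 + (starRingEnd ℂ) (w 1) * v 1 + (starRingEnd ℂ) (w 2) * v 0

/-- The Cartan angle Å(P₄,P₁,P₂) = π/3, where P₄ = ∞, P₁ = (1,√3),
P₂ = (−ω,√3) in the Heisenberg model. -/
theorem cartan_angle_P4_P1_P2 :
    letI ω : ℂ := (-1 - Complex.I * Real.sqrt 3) / 2
    letI v₁ : Fin 3 → ℂ := ![(Complex.I * Real.sqrt 3 - 1) / 2, 1, 1]
    letI v₂ : Fin 3 → ℂ := ![(Complex.I * Real.sqrt 3 - 1) / 2, -ω, 1]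
    letI v₄ : Fin 3 → ℂ := ![1, 0, 0]
    Complex.arg (-(hermForm v₄ v₁ * hermForm v₁ v₂ * hermForm v₂ v₄)) = Real.pi / 3 := by
  have key : -(hermForm ![1, 0, 0] ![(Complex.I * Real.sqrt 3 - 1) / 2, 1, 1]
      * hermForm ![(Complex.I * Real.sqrt 3 - 1) / 2, 1, 1]
          ![(Complex.I * Real.sqrt 3 - 1) / 2,
            -((-1 - Complex.I * Real.sqrt 3) / 2), 1]
      * hermForm ![(Complex.I * Real.sqrt 3 - 1) / 2,
            -((-1 - Complex.I * Real.sqrt 3) / 2), 1] ![1, 0, 0])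
      = Complex.ofReal (Real.cos (Real.pi / 3))
        + Complex.ofReal (Real.sin (Real.pi / 3)) * Complex.I := by
    rw [Real.cos_pi_div_three, Real.sin_pi_div_three]
    simp [hermForm, map_div₀, map_sub, map_neg, Complex.ext_iff]
    ring_nf
    simp [Real.sq_sqrt (by norm_num : (3:ℝ) ≥ 0)]
    ring
  show Complex.arg _ = _
  rw [key, Complex.ofReal_cos, Complex.ofReal_sin, Complex.arg_cos_add_sin_mul_I]
  constructor
  · linarith [Real.pi_pos]
  · linarith [Real.pi_pos]
end

section
/- Let ω = (−1 − i√3)/2 and let G₁ be the 3×3 complex matrix with rows (−ω, 0, 0), (1, 1, 0), (−conj(ω), ω, −ω). Then G₁⁶ is a nonzero scalar multiple of the identity matrix, so G₁ has order dividing 6 in PGL(3,ℂ). -/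
/-- G₁⁶ is a nonzero scalar multiple of the identity, so G₁ has order
dividing 6 in PGL(3,ℂ). -/
theorem G1_pow_six_scalar :
    letI ω : ℂ := (-1 - Complex.I * Real.sqrt 3) / 2
    letI G₁ : Matrix (Fin 3) (Fin 3) ℂ :=
      !![-ω, 0, 0; 1, 1, 0; -(starRingEnd ℂ) ω, ω, -ω]
    ∃ c : ℂ, c ≠ 0 ∧ G₁ ^ 6 = c • (1 : Matrix (Fin 3) (Fin 3) ℂ) := by
  refine ⟨1, one_ne_zero, ?_⟩
  have hs : ((Real.sqrt 3 : ℝ) : ℂ) ^ 2 = 3 := by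
    rw [← Complex.ofReal_pow, Real.sq_sqrt (by norm_num : (0:ℝ) ≤ 3)]
    norm_num
  set w : ℂ := (-1 - Complex.I * Real.sqrt 3) / 2 with hw
  have hω : w ^ 2 + w + 1 = 0 := by
    rw [hw]
    linear_combination (((Real.sqrt 3 : ℝ) : ℂ) ^ 2 / 4) * Complex.I_sq
      - (1 / 4 : ℂ) * hs
  have hconj : (starRingEnd ℂ) w = w ^ 2 := by
    rw [hw, map_div₀, map_sub, map_mul, Complex.conj_I, Complex.conj_ofReal,
      map_neg, map_one, map_ofNat, ← hw]
    linear_combination -hω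
  rw [hconj, show (6 : ℕ) = 2 * 3 from rfl, pow_mul, pow_two,
    Matrix.mul_fin_three, pow_succ, pow_two, Matrix.mul_fin_three,
    Matrix.mul_fin_three, one_smul]
  ext i j
  fin_cases i <;> fin_cases j <;>
    simp [Matrix.one_apply]
  · linear_combination (w ^ 4 - w ^ 3 + w - 1) * hω
  · linear_combination (-w ^ 3 + 2 * w ^ 2 - 2 * w + 1) * hω
  · linear_combination (6 * w ^ 5 - 6 * w ^ 4 + 5 * w ^ 3 - 3 * w ^ 2 + w) * hω
  · linear_combination (-w ^ 4 + 2 * w ^ 3 - 2 * w ^ 2 + w) * hω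
  · linear_combination (w ^ 4 - w ^ 3 + w - 1) * hω
end

section
/- Let ω = (−1 − i√3)/2, G₁ the matrix with rows (−ω,0,0),(1,1,0),(−conj(ω),ω,−ω), G₂ the matrix with rows (1,1,ω),(0,−conj(ω),conj(ω)),(0,0,1), G₃ = diag(1,−ω,1), and G₄ the matrix with rows (0,0,−ω),(0,−conj(ω),0),(−ω,0,1−conj(ω)). Then (G₂G₃)⁻¹·G₄⁻¹·G₃·G₁·G₄ is a nonzero scalar multiple of the identity matrix. -/
noncomputable def ww : ℂ := (-1 - Complex.I * Real.sqrt 3) / 2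

noncomputable def A1 : Matrix (Fin 3) (Fin 3) ℂ :=
  !![-ww, 0, 0; 1, 1, 0; -(starRingEnd ℂ) ww, ww, -ww]
noncomputable def A2 : Matrix (Fin 3) (Fin 3) ℂ :=
  !![1, 1, ww; 0, -(starRingEnd ℂ) ww, (starRingEnd ℂ) ww; 0, 0, 1]
noncomputable def A3 : Matrix (Fin 3) (Fin 3) ℂ := !![1, 0, 0; 0, -ww, 0; 0, 0, 1]
noncomputable def A4 : Matrix (Fin 3) (Fin 3) ℂ :=
  !![0, 0, -ww; 0, -(starRingEnd ℂ) ww, 0; -ww, 0, 1 - (starRingEnd ℂ) ww]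
noncomputable def B1 : Matrix (Fin 3) (Fin 3) ℂ :=
  !![1, ww, -1 - ww; 0, 1, 1 + ww; 0, 0, 1]
noncomputable def B2 : Matrix (Fin 3) (Fin 3) ℂ :=
  !![1 - ww, 0, 1 + ww; 0, -ww, 0; 1 + ww, 0, 0]

lemma hs3 : (Real.sqrt 3 : ℂ) * (Real.sqrt 3 : ℂ) = 3 := by
  norm_cast
  exact Real.mul_self_sqrt (by norm_num)

lemma ww_conj : (starRingEnd ℂ) ww = -1 - ww := by
  unfold ww
  simp only [map_div₀, map_sub, map_one, map_mul, map_neg, map_ofNat,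
    Complex.conj_I, Complex.conj_ofReal]
  ring

lemma ww_sq : ww ^ 2 = -1 - ww := by
  unfold ww
  linear_combination (1/4 : ℂ) * (Real.sqrt 3 : ℂ) * (Real.sqrt 3 : ℂ) * Complex.I_mul_I
    - (1/4 : ℂ) * hs3

lemma ww_cube : ww ^ 3 = 1 := by
  linear_combination (ww - 1) * ww_sq

lemma ww_pow4 : ww ^ 4 = ww := by
  linear_combination (ww ^ 2 - ww) * ww_sq

lemma ww_ne : ww ≠ 0 := by
  intro h
  have := ww_sq
  rw [h] at this
  norm_num at this

lemma key1 : (A2 * A3) * B1 = 1 := by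
  unfold A2 A3 B1
  rw [Matrix.mul_fin_three, Matrix.mul_fin_three]
  ext i j
  fin_cases i <;> fin_cases j <;> simp [ww_conj, Matrix.vecHead, Matrix.vecTail, -mul_eq_zero] <;>
    (ring_nf; try simp only [ww_sq, ww_cube, ww_pow4]) <;> try ring

lemma key2 : A4 * B2 = 1 := by
  unfold A4 B2
  rw [Matrix.mul_fin_three]
  ext i j
  fin_cases i <;> fin_cases j <;> simp [ww_conj, Matrix.vecHead, Matrix.vecTail, -mul_eq_zero] <;>
    (ring_nf; try simp only [ww_sq, ww_cube, ww_pow4]) <;> try ring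

lemma key3 : B1 * B2 * A3 * A1 * A4 = (-ww) • (1 : Matrix (Fin 3) (Fin 3) ℂ) := by
  unfold A1 A3 A4 B1 B2
  rw [Matrix.mul_fin_three, Matrix.mul_fin_three, Matrix.mul_fin_three,
    Matrix.mul_fin_three]
  ext i j
  fin_cases i <;> fin_cases j <;> simp [ww_conj, Matrix.vecHead, Matrix.vecTail, -mul_eq_zero] <;>
    (ring_nf; try simp only [ww_sq, ww_cube, ww_pow4]) <;> try ring

/-- Triviality of the geometric holonomy around the edge e_R of the branched
CR structure on the figure eight knot complement:
(G₂G₃)⁻¹·G₄⁻¹·G₃·G₁·G₄ is a nonzero scalar multiple of the identity. -/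
theorem holonomy_figure_eight_eR_trivial :
    letI ω : ℂ := (-1 - Complex.I * Real.sqrt 3) / 2
    letI G₁ : Matrix (Fin 3) (Fin 3) ℂ :=
      !![-ω, 0, 0; 1, 1, 0; -(starRingEnd ℂ) ω, ω, -ω]
    letI G₂ : Matrix (Fin 3) (Fin 3) ℂ :=
      !![1, 1, ω; 0, -(starRingEnd ℂ) ω, (starRingEnd ℂ) ω; 0, 0, 1]
    letI G₃ : Matrix (Fin 3) (Fin 3) ℂ := !![1, 0, 0; 0, -ω, 0; 0, 0, 1]
    letI G₄ : Matrix (Fin 3) (Fin 3) ℂ :=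
      !![0, 0, -ω; 0, -(starRingEnd ℂ) ω, 0; -ω, 0, 1 - (starRingEnd ℂ) ω]
    ∃ c : ℂ, c ≠ 0 ∧
      (G₂ * G₃)⁻¹ * G₄⁻¹ * G₃ * G₁ * G₄ = c • (1 : Matrix (Fin 3) (Fin 3) ℂ) := by
  show ∃ c : ℂ, c ≠ 0 ∧
      (A2 * A3)⁻¹ * A4⁻¹ * A3 * A1 * A4 = c • (1 : Matrix (Fin 3) (Fin 3) ℂ)
  refine ⟨-ww, neg_ne_zero.mpr ww_ne, ?_⟩
  rw [Matrix.inv_eq_right_inv key1, Matrix.inv_eq_right_inv key2]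
  exact key3
end
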